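/- Let X and Y be metric spaces and equip X × Y with the l¹-metric. Let S and S_n (n = 1, 2, …) be closed subsets of X × Y. If S_n converges weakly (in the weak Hausdorff sense) to S as n → ∞, then dis_≻ S ≤ liminf_{n→∞} dis_≻ S_n. -/

import Mathlib

open MeasureTheory Topology Filter Set Metric ENNReal

noncomputable section

/-- The support of a Borel measure: points all of whose open neighborhoods have
positive measure. -/
def msupport {X : Type*} [TopologicalSpace X] [MeasurableSpace X] (μ : Measure X) : Set X :=
  {x | ∀ U : Set X, IsOpen U → x ∈ U → 0 < μ U}

/-- `dis_≻ S = sup { d_Y(y,y') − d_X(x,x') : (x,y),(x',y') ∈ S }`, with `dis_≻ ∅ = 0`. -/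
def disSucc {X Y : Type*} [MetricSpace X] [MetricSpace Y] (S : Set (X × Y)) : ℝ≥0∞ :=
  ⨆ p ∈ S, ⨆ q ∈ S, ENNReal.ofReal (dist p.2 q.2 - dist p.1 q.1)

/-- `dis S = sup { |d_X(x,x') − d_Y(y,y')| : (x,y),(x',y') ∈ S }`, with `dis ∅ = 0`. -/
def disBox {X Y : Type*} [MetricSpace X] [MetricSpace Y] (S : Set (X × Y)) : ℝ≥0∞ :=
  ⨆ p ∈ S, ⨆ q ∈ S, ENNReal.ofReal |dist p.1 q.1 - dist p.2 q.2|

/-- `π` is a coupling of `μ` and `ν`. -/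
def IsCoupling {X Y : Type*} [MeasurableSpace X] [MeasurableSpace Y]
    (π : Measure (X × Y)) (μ : Measure X) (ν : Measure Y) : Prop :=
  IsProbabilityMeasure π ∧ π.map Prod.fst = μ ∧ π.map Prod.snd = ν

/-- `X ≻_ε Y`: the Lipschitz order with additive error `ε`. -/
def LipDomE {X Y : Type*} [MetricSpace X] [MetricSpace Y]
    [MeasurableSpace X] [MeasurableSpace Y]
    (μ : Measure X) (ν : Measure Y) (ε : ℝ) : Prop :=
  ∃ π : Measure (X × Y), IsCoupling π μ ν ∧
    ∃ S : Set (X × Y), IsClosed S ∧ disSucc S ≤ ENNReal.ofReal ε ∧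
      ENNReal.ofReal (1 - ε) ≤ π S

/-- `X ≻ Y`: the Lipschitz order. There is a 1-Lipschitz map
`f : supp m_X → supp m_Y` with `f_* m_X = m_Y`. -/
def LipOrder {X Y : Type*} [MetricSpace X] [MetricSpace Y]
    [MeasurableSpace X] [MeasurableSpace Y]
    (μ : Measure X) (ν : Measure Y) : Prop :=
  ∃ f : msupport μ → msupport ν, LipschitzWith 1 f ∧
    ∀ A : Set Y, MeasurableSet A →
      μ (Subtype.val '' ((fun x => (f x : Y)) ⁻¹' A)) = ν A

/-- The box metric. -/
def boxDist {X Y : Type*} [MetricSpace X] [MetricSpace Y]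
    [MeasurableSpace X] [MeasurableSpace Y]
    (μ : Measure X) (ν : Measure Y) : ℝ≥0∞ :=
  ⨅ (S : Set (X × Y)) (_ : IsClosed S) (π : Measure (X × Y)) (_ : IsCoupling π μ ν),
    max (disBox S) (1 - π S)

/-- The unilateral box metric `□_≻(X,Y) = inf { ε ≥ 0 : X ≻_ε Y }`. -/
def ubox {X Y : Type*} [MetricSpace X] [MetricSpace Y]
    [MeasurableSpace X] [MeasurableSpace Y]
    (μ : Measure X) (ν : Measure Y) : ℝ :=
  sInf {ε : ℝ | 0 ≤ ε ∧ LipDomE μ ν ε}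

/-- The Prokhorov metric
`d_P(μ,ν) = inf { ε > 0 : μ(U_ε(A)) ≥ ν(A) − ε for every Borel A }`. -/
def prokDist {Y : Type*} [MetricSpace Y] [MeasurableSpace Y] (μ ν : Measure Y) : ℝ :=
  sInf {ε : ℝ | 0 < ε ∧ ∀ A : Set Y, MeasurableSet A →
    ν A ≤ μ (Metric.thickening ε A) + ENNReal.ofReal ε}

/-- `f : supp m_X → supp m_Y` is 1-Lipschitz up to an additive error `ε`. -/
def LipUpTo {X Y : Type*} [MetricSpace X] [MetricSpace Y]
    [MeasurableSpace X] [MeasurableSpace Y]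
    (μ : Measure X) (ν : Measure Y) (f : msupport μ → msupport ν) (ε : ℝ) : Prop :=
  ∃ X₀ : Set X, MeasurableSet X₀ ∧ X₀ ⊆ msupport μ ∧
    ENNReal.ofReal (1 - ε) ≤ μ X₀ ∧
    ∀ x x' : msupport μ, (x : X) ∈ X₀ → (x' : X) ∈ X₀ →
      dist (f x : Y) (f x' : Y) ≤ dist (x : X) (x' : X) + ε

/-- `X ≻^{KY}_ε Y`: there is a Borel measurable map `f : supp m_X → supp m_Y`
which is 1-Lipschitz up to `ε` and satisfies `d_P(f_* m_X, m_Y) ≤ ε`. -/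
def KYDom {X Y : Type*} [MetricSpace X] [MetricSpace Y]
    [MeasurableSpace X] [MeasurableSpace Y]
    (μ : Measure X) (ν : Measure Y) (ε : ℝ) : Prop :=
  ∃ f : msupport μ → msupport ν, Measurable f ∧ LipUpTo μ ν f ε ∧
    prokDist (Measure.map (fun x => (f x : Y)) (Measure.comap Subtype.val μ)) ν ≤ ε


/-- Distance from a point to a set with respect to the `l¹`-metric on `X × Y`
(`⊤` for the empty set). -/
def l1InfEdist {X Y : Type*} [MetricSpace X] [MetricSpace Y]
    (p : X × Y) (S : Set (X × Y)) : ℝ≥0∞ :=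
  ⨅ q ∈ S, (edist p.1 q.1 + edist p.2 q.2)

/-- If closed sets `S_n` converge weakly (weak Hausdorff sense,
w.r.t. the `l¹`-metric on `X × Y`) to `S`, then `dis_≻ S ≤ liminf dis_≻ S_n`. -/
theorem disSucc_le_liminf_of_weakHausdorff {X Y : Type*} [MetricSpace X] [MetricSpace Y]
    (S : Set (X × Y)) (Sn : ℕ → Set (X × Y))
    (hS : IsClosed S) (hSn : ∀ n, IsClosed (Sn n))
    (h1 : ∀ p ∈ S, Tendsto (fun n => l1InfEdist p (Sn n)) atTop (𝓝 0))
    (h2 : ∀ p ∉ S, 0 < liminf (fun n => l1InfEdist p (Sn n)) atTop) :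
    disSucc S ≤ liminf (fun n => disSucc (Sn n)) atTop := by
  refine iSup₂_le fun p hp => iSup₂_le fun q hq => ?_
  set c := dist p.2 q.2 - dist p.1 q.1 with hc
  rcases le_or_gt c 0 with h0 | h0
  · simp [ENNReal.ofReal_eq_zero.2 h0]
  have key : ∀ ε : ℝ, 0 < ε →
      ENNReal.ofReal (c - ε) ≤ liminf (fun n => disSucc (Sn n)) atTop := by
    intro ε hε
    have hhalf : (0:ℝ≥0∞) < ENNReal.ofReal (ε/2) := ENNReal.ofReal_pos.2 (by linarith)
    have hp' : ∀ᶠ n in atTop, l1InfEdist p (Sn n) < ENNReal.ofReal (ε/2) :=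
      (h1 p hp).eventually_lt_const hhalf
    have hq' : ∀ᶠ n in atTop, l1InfEdist q (Sn n) < ENNReal.ofReal (ε/2) :=
      (h1 q hq).eventually_lt_const hhalf
    refine le_liminf_of_le (by isBoundedDefault) ?_
    filter_upwards [hp', hq'] with n hpn hqn
    rw [l1InfEdist, ] at hpn hqn
    simp only [iInf_lt_iff] at hpn hqn
    obtain ⟨r, hr, hrd⟩ := hpn
    obtain ⟨s, hs, hsd⟩ := hqn
    rw [edist_dist, edist_dist, ← ENNReal.ofReal_add dist_nonneg dist_nonneg,
      ENNReal.ofReal_lt_ofReal_iff (by linarith)] at hrd hsd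
    calc ENNReal.ofReal (c - ε)
        ≤ ENNReal.ofReal (dist r.2 s.2 - dist r.1 s.1) := by
          apply ENNReal.ofReal_le_ofReal
          have t1 := dist_triangle4 p.2 r.2 s.2 q.2
          have t2 := dist_triangle4 r.1 p.1 q.1 s.1
          have e1 := dist_comm p.2 r.2
          have e2 := dist_comm s.2 q.2
          have e3 := dist_comm r.1 p.1
          have e4 := dist_comm q.1 s.1
          simp only [hc]
          linarith
      _ ≤ disSucc (Sn n) := by
          rw [disSucc]
          exact le_iSup₂_of_le r hr (le_iSup₂_of_le s hs le_rfl)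
  refine ENNReal.le_of_forall_pos_le_add fun ε hε _ => ?_
  have hε' : (0:ℝ) < (ε:ℝ) := hε
  calc ENNReal.ofReal c = ENNReal.ofReal ((c - ε) + ε) := by ring_nf
    _ ≤ ENNReal.ofReal (c - ε) + ENNReal.ofReal ε := ENNReal.ofReal_add_le
    _ ≤ liminf (fun n => disSucc (Sn n)) atTop + ε := by
        rw [ENNReal.ofReal_coe_nnreal]
        exact add_le_add_left (key ε hε') _
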